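/- Let μ > 0 and σ > 0, and let Φ denote the standard normal cumulative distribution function. Define Ψ(x) = Φ((x−μ)/σ) − Φ((ln x − ln μ)/(σ/μ)) for x > 0. Then sup_{x>0} |Ψ(x)| ≤ (1/√(2π)) · max( (exp(1 − σ²/μ² − √(σ⁴/μ⁴ + 1)) − 2 + σ²/μ² + √(σ⁴/μ⁴ + 1))/(σ/μ), (exp(2σ/μ) − 1 − 2σ/μ)/(σ/μ) ). -/

import Mathlib

open MeasureTheory Set

noncomputable def stdNormalCDF (t : ℝ) : ℝ :=
  (Real.sqrt (2 * Real.pi))⁻¹ * ∫ u in Set.Iic t, Real.exp (-u ^ 2 / 2)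
lemma gauss_integrable : Integrable (fun u : ℝ => Real.exp (-u ^ 2 / 2)) := by
  have h := integrable_exp_neg_mul_sq (by norm_num : (0:ℝ) < 1/2)
  have : (fun u : ℝ => Real.exp (-u ^ 2 / 2)) = fun u : ℝ => Real.exp (-(1/2) * u ^ 2) := by
    funext u; ring_nf
  rw [this]; exact h

lemma exp_int_Ioi {c : ℝ} (hc : 0 < c) (b : ℝ) :
    ∫ u in Ioi b, Real.exp (-(c * u)) = Real.exp (-(c * b)) / c := by
  have hderiv : ∀ x ∈ Ici b, HasDerivAt (fun x : ℝ => -Real.exp (-(c * x)) / c)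
      (Real.exp (-(c * x))) x := by
    intro x _
    have h1 : HasDerivAt (fun x : ℝ => -(c * x)) (-c) x := by
      simpa using ((hasDerivAt_id x).const_mul (-c))
    have h3 := ((h1.exp).div_const c).neg
    have e1 : (fun x : ℝ => -Real.exp (-(c * x)) / c) = -fun x => Real.exp (-(c * x)) / c := by
      funext x; simp [neg_div]
    have e2 : Real.exp (-(c * x)) = -(Real.exp (-(c * x)) * -c / c) := by
      rw [mul_neg, neg_div, neg_neg, mul_div_assoc, div_self hc.ne', mul_one]
    rw [e1, e2]; exact h3
  have hint : IntegrableOn (fun x : ℝ => Real.exp (-(c * x))) (Ioi b) := by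
    have := exp_neg_integrableOn_Ioi b hc
    simpa [neg_mul] using this
  have htend : Filter.Tendsto (fun x : ℝ => -Real.exp (-(c * x)) / c) Filter.atTop (nhds 0) := by
    have h0 : Filter.Tendsto (fun x : ℝ => c * x) Filter.atTop Filter.atTop :=
      Filter.Tendsto.const_mul_atTop hc Filter.tendsto_id
    have h1 : Filter.Tendsto (fun x : ℝ => -(c * x)) Filter.atTop Filter.atBot :=
      Filter.tendsto_neg_atBot_iff.mpr h0
    have h2 := (Real.tendsto_exp_atBot).comp h1
    have h3 := (h2.neg).div_const c
    simpa using h3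
  have := MeasureTheory.integral_Ioi_of_hasDerivAt_of_tendsto' hderiv hint htend
  rw [this]
  field_simp
  ring

lemma tail_Ioi {b : ℝ} (hb : 0 < b) :
    ∫ u in Ioi b, Real.exp (-u ^ 2 / 2) ≤ Real.exp (-b ^ 2 / 2) / b := by
  have hmono : ∀ u ∈ Ioi b, Real.exp (-u ^ 2 / 2) ≤ Real.exp (b ^ 2 / 2) * Real.exp (-(b * u)) := by
    intro u hu
    rw [← Real.exp_add]
    apply Real.exp_le_exp.mpr
    nlinarith [sq_nonneg (u - b)]
  have hint1 : IntegrableOn (fun u : ℝ => Real.exp (-u ^ 2 / 2)) (Ioi b) :=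
    gauss_integrable.integrableOn
  have hint2 : IntegrableOn (fun u : ℝ => Real.exp (b ^ 2 / 2) * Real.exp (-(b * u))) (Ioi b) := by
    have := exp_neg_integrableOn_Ioi b hb
    have h' := this.const_mul (Real.exp (b ^ 2 / 2))
    simp only [neg_mul] at h'
    exact h'
  calc ∫ u in Ioi b, Real.exp (-u ^ 2 / 2)
      ≤ ∫ u in Ioi b, Real.exp (b ^ 2 / 2) * Real.exp (-(b * u)) :=
        setIntegral_mono_on hint1 hint2 measurableSet_Ioi hmono
    _ = Real.exp (b ^ 2 / 2) * (Real.exp (-(b * b)) / b) := by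
        rw [integral_const_mul, exp_int_Ioi hb]
    _ = Real.exp (-b ^ 2 / 2) / b := by
        rw [mul_div_assoc'] ; rw [← Real.exp_add]; ring_nf

lemma tail_Iic {t : ℝ} (ht : t < 0) :
    ∫ u in Iic t, Real.exp (-u ^ 2 / 2) ≤ Real.exp (-t ^ 2 / 2) / (-t) := by
  have h1 : ∫ u in Iic t, Real.exp (-u ^ 2 / 2) = ∫ u in Ioi (-t), Real.exp (-u ^ 2 / 2) := by
    rw [show Iic t = Iic (-(-t)) by rw [neg_neg], ← integral_comp_neg_Ioi]
    apply setIntegral_congr_fun measurableSet_Ioi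
    intro u _; simp [neg_sq]
  rw [h1]
  have := tail_Ioi (by linarith : (0:ℝ) < -t)
  simpa [neg_sq] using this
lemma quad_le_exp {u : ℝ} (hu : 0 ≤ u) : 1 + u + u ^ 2 / 2 ≤ Real.exp u := by
  have h := Real.sum_le_exp_of_nonneg hu 3
  simp [Finset.sum_range_succ] at h
  nlinarith [h]

lemma sq_exp_le_one (r : ℝ) : r ^ 2 * Real.exp (-r ^ 2 / 2) ≤ 1 := by
  have h1 : (0:ℝ) ≤ r ^ 2 / 2 := by positivity
  have h2 := quad_le_exp h1
  have h3 : r ^ 2 ≤ Real.exp (r ^ 2 / 2) := by nlinarith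
  have h4 : Real.exp (-r ^ 2 / 2) = (Real.exp (r ^ 2 / 2))⁻¹ := by
    rw [← Real.exp_neg]; ring_nf
  rw [h4]
  have h5 : (0:ℝ) < Real.exp (r ^ 2 / 2) := Real.exp_pos _
  rw [mul_inv_le_iff₀ h5, one_mul]
  exact h3
lemma key {s : ℝ} (hs : 0 < s) {y : ℝ} (hy : 0 < y) :
    ∫ u in Ioc (Real.log y / s) ((y - 1) / s), Real.exp (-u ^ 2 / 2) ≤ 2 * s := by
  set b := Real.log y / s with hbdef
  set t := (y - 1) / s with htdef
  have hlog := Real.log_le_sub_one_of_pos hy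
  have hbt : b ≤ t := by rw [hbdef, htdef]; gcongr
  have hnonneg : ∀ u : ℝ, 0 ≤ Real.exp (-u ^ 2 / 2) := fun u => (Real.exp_pos _).le
  have hconst : ∀ C : ℝ, (∀ u ∈ Ioc b t, Real.exp (-u ^ 2 / 2) ≤ C) →
      ∫ u in Ioc b t, Real.exp (-u ^ 2 / 2) ≤ (t - b) * C := by
    intro C hC
    have h1 : ∫ u in Ioc b t, Real.exp (-u ^ 2 / 2) ≤ ∫ _ in Ioc b t, C :=
      setIntegral_mono_on gauss_integrable.integrableOn
        (integrableOn_const measure_Ioc_lt_top.ne) measurableSet_Ioc hC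
    have h2 : ∫ _ in Ioc b t, C = (t - b) * C := by
      rw [setIntegral_const, Real.volume_real_Ioc_of_le hbt, smul_eq_mul]
    linarith
  rcases le_total 1 y with h1 | h1
  · -- y ≥ 1 : 0 ≤ b ≤ t
    have hb0 : 0 ≤ b := div_nonneg (Real.log_nonneg h1) hs.le
    rcases le_or_gt (1 / (2 * s)) b with hcase | hcase
    · have hbpos : 0 < b := lt_of_lt_of_le (by positivity) hcase
      have hsub : ∫ u in Ioc b t, Real.exp (-u ^ 2 / 2) ≤
          ∫ u in Ioi b, Real.exp (-u ^ 2 / 2) :=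
        setIntegral_mono_set gauss_integrable.integrableOn
          (Filter.Eventually.of_forall hnonneg)
          (HasSubset.Subset.eventuallyLE Ioc_subset_Ioi_self)
      have h3 : Real.exp (-b ^ 2 / 2) ≤ 1 := Real.exp_le_one_iff.mpr (by nlinarith)
      have h4 : Real.exp (-b ^ 2 / 2) / b ≤ 1 / b := by gcongr
      have h5 : 1 / b ≤ 2 * s := by
        rw [div_le_iff₀ hbpos]
        rw [div_le_iff₀ (by positivity : (0:ℝ) < 2 * s)] at hcase
        linarith
      linarith [tail_Ioi hbpos, hsub]
    · -- b < 1/(2s)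
      have hL : Real.log y = s * b := by rw [hbdef]; field_simp
      have hL0 : 0 ≤ Real.log y := Real.log_nonneg h1
      have hsb0 : 0 ≤ s * b := by rw [← hL]; exact hL0
      have hLhalf : s * b ≤ 1 / 2 := by
        have h6 := mul_le_mul_of_nonneg_left hcase.le hs.le
        have h7 : s * (1 / (2 * s)) = 1 / 2 := by
          rw [mul_one_div, div_eq_div_iff (by positivity : (2*s:ℝ) ≠ 0) (by norm_num : (2:ℝ) ≠ 0)]
          ring
        linarith
      have hE : Real.exp (Real.log y) = y := Real.exp_log hy
      have hEineq : y * (1 - s * b) ≤ 1 := by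
        have h := Real.add_one_le_exp (-Real.log y)
        rw [Real.exp_neg, hE, hL] at h
        calc y * (1 - s * b) = y * (-(s * b) + 1) := by ring
          _ ≤ y * y⁻¹ := mul_le_mul_of_nonneg_left h hy.le
          _ = 1 := mul_inv_cancel₀ hy.ne'
      have hkey : y - 1 - s * b ≤ 2 * (s * b) ^ 2 := by nlinarith
      have htb : t - b ≤ 2 * s * b ^ 2 := by
        have e1 : t - b = (y - 1 - Real.log y) / s := by rw [htdef, hbdef]; ring
        rw [e1, div_le_iff₀ hs, hL]
        nlinarith
      have hCbound : ∀ u ∈ Ioc b t, Real.exp (-u ^ 2 / 2) ≤ Real.exp (-b ^ 2 / 2) := by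
        intro u hu
        apply Real.exp_le_exp.mpr
        have h8 : b ≤ u := hu.1.le
        nlinarith
      have hI := hconst _ hCbound
      have h6 : (t - b) * Real.exp (-b ^ 2 / 2) ≤ 2 * s * b ^ 2 * Real.exp (-b ^ 2 / 2) :=
        mul_le_mul_of_nonneg_right htb (Real.exp_pos _).le
      have h7 := sq_exp_le_one b
      nlinarith
  · -- y ≤ 1 : b ≤ t ≤ 0
    have ht0 : t ≤ 0 := div_nonpos_of_nonpos_of_nonneg (by linarith) hs.le
    rcases le_or_gt (1 / (2 * s)) (-t) with hcase | hcase
    · have htneg : t < 0 := by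
        have : (0:ℝ) < 1 / (2 * s) := by positivity
        linarith
      have hsub : ∫ u in Ioc b t, Real.exp (-u ^ 2 / 2) ≤
          ∫ u in Iic t, Real.exp (-u ^ 2 / 2) :=
        setIntegral_mono_set gauss_integrable.integrableOn
          (Filter.Eventually.of_forall hnonneg)
          (HasSubset.Subset.eventuallyLE Ioc_subset_Iic_self)
      have h3 : Real.exp (-t ^ 2 / 2) ≤ 1 := Real.exp_le_one_iff.mpr (by nlinarith)
      have h4 : Real.exp (-t ^ 2 / 2) / (-t) ≤ 1 / (-t) := by
        gcongr
        linarith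
      have h5 : 1 / (-t) ≤ 2 * s := by
        rw [div_le_iff₀ (by linarith : (0:ℝ) < -t)]
        rw [div_le_iff₀ (by positivity : (0:ℝ) < 2 * s)] at hcase
        linarith
      linarith [tail_Iic htneg, hsub]
    · -- -t < 1/(2s)
      have hv : 1 - y = s * -t := by rw [htdef]; field_simp; ring
      have hyhalf : 1 / 2 ≤ y := by
        have h6 : s * -t ≤ s * (1 / (2 * s)) := mul_le_mul_of_nonneg_left hcase.le hs.le
        have h7 : s * (1 / (2 * s)) = 1 / 2 := by
          rw [mul_one_div, div_eq_div_iff (by positivity : (2*s:ℝ) ≠ 0) (by norm_num : (2:ℝ) ≠ 0)]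
          ring
        linarith
      have hloginv : -Real.log y ≤ y⁻¹ - 1 := by
        have h := Real.log_le_sub_one_of_pos (inv_pos.mpr hy)
        rwa [Real.log_inv] at h
      have hkey : y - 1 - Real.log y ≤ 2 * (1 - y) ^ 2 := by
        have h8 : y - 1 - Real.log y ≤ y - 1 + (y⁻¹ - 1) := by linarith
        have h9 : y - 1 + (y⁻¹ - 1) = (1 - y) ^ 2 / y := by field_simp; ring
        have h10 : (1 - y) ^ 2 / y ≤ 2 * (1 - y) ^ 2 := by
          rw [div_le_iff₀ hy]
          nlinarith [sq_nonneg (1 - y)]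
        linarith
      have htb : t - b ≤ 2 * s * t ^ 2 := by
        have e1 : t - b = (y - 1 - Real.log y) / s := by rw [htdef, hbdef]; ring
        rw [e1, div_le_iff₀ hs]
        have h11 : (1 - y) ^ 2 = s ^ 2 * t ^ 2 := by rw [hv]; ring
        nlinarith
      have hCbound : ∀ u ∈ Ioc b t, Real.exp (-u ^ 2 / 2) ≤ Real.exp (-t ^ 2 / 2) := by
        intro u hu
        apply Real.exp_le_exp.mpr
        have h12 : u ≤ t := hu.2
        nlinarith
      have hI := hconst _ hCbound
      have h6 : (t - b) * Real.exp (-t ^ 2 / 2) ≤ 2 * s * t ^ 2 * Real.exp (-t ^ 2 / 2) :=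
        mul_le_mul_of_nonneg_right htb (Real.exp_pos _).le
      have h7 := sq_exp_le_one t
      nlinarith

theorem lognormal_approximation_bound (μ σ : ℝ) (hμ : 0 < μ) (hσ : 0 < σ) :
    ∀ x > (0 : ℝ),
      |stdNormalCDF ((x - μ) / σ) - stdNormalCDF ((Real.log x - Real.log μ) / (σ / μ))| ≤
        (Real.sqrt (2 * Real.pi))⁻¹ *
          max
            ((Real.exp (1 - σ ^ 2 / μ ^ 2 - Real.sqrt (σ ^ 4 / μ ^ 4 + 1)) - 2 + σ ^ 2 / μ ^ 2 +
                Real.sqrt (σ ^ 4 / μ ^ 4 + 1)) / (σ / μ))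
            ((Real.exp (2 * σ / μ) - 1 - 2 * σ / μ) / (σ / μ)) := by
  intro x hx
  have hs : 0 < σ / μ := div_pos hσ hμ
  have hy : 0 < x / μ := div_pos hx hμ
  have hblog : (Real.log x - Real.log μ) / (σ / μ) = Real.log (x / μ) / (σ / μ) := by
    rw [Real.log_div hx.ne' hμ.ne']
  have htx : (x - μ) / σ = (x / μ - 1) / (σ / μ) := by field_simp
  have hbt : Real.log (x / μ) / (σ / μ) ≤ (x / μ - 1) / (σ / μ) := by
    gcongr
    exact Real.log_le_sub_one_of_pos hy
  have hdiff : stdNormalCDF ((x - μ) / σ) -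
      stdNormalCDF ((Real.log x - Real.log μ) / (σ / μ)) =
      (Real.sqrt (2 * Real.pi))⁻¹ *
        ∫ u in Ioc (Real.log (x / μ) / (σ / μ)) ((x / μ - 1) / (σ / μ)),
          Real.exp (-u ^ 2 / 2) := by
    unfold stdNormalCDF
    rw [hblog, htx, ← mul_sub]
    congr 1
    rw [intervalIntegral.integral_Iic_sub_Iic gauss_integrable.integrableOn
      gauss_integrable.integrableOn, intervalIntegral.integral_of_le hbt]
  rw [hdiff]
  have hInonneg : 0 ≤ ∫ u in Ioc (Real.log (x / μ) / (σ / μ)) ((x / μ - 1) / (σ / μ)),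
      Real.exp (-u ^ 2 / 2) :=
    setIntegral_nonneg measurableSet_Ioc fun u _ => (Real.exp_pos _).le
  have hc : (0:ℝ) ≤ (Real.sqrt (2 * Real.pi))⁻¹ := by positivity
  rw [abs_of_nonneg (mul_nonneg hc hInonneg)]
  apply mul_le_mul_of_nonneg_left _ hc
  have hI := key hs hy
  have hB : 2 * (σ / μ) ≤ (Real.exp (2 * σ / μ) - 1 - 2 * σ / μ) / (σ / μ) := by
    have h2s : 2 * σ / μ = 2 * (σ / μ) := by ring
    rw [h2s, le_div_iff₀ hs]
    have hq := quad_le_exp (by positivity : (0:ℝ) ≤ 2 * (σ / μ))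
    nlinarith [hq, hs]
  exact le_trans hI (le_trans hB (le_max_right _ _))
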